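/- Let V : ℝ → ℝ be differentiable with derivative V' Lipschitz continuous with constant γ > 0, and suppose there exists r₀ > 0 with |V''(r₀)| = γ (attained supremum, V'' continuous). For η even, η > 2, particles x₀,…,x_{η−1} ∈ ℝ^d, define V_pair(x) = (1/2)·Σ_{i≠j} V(‖x_i − x_j‖). Then the Lipschitz constant of ∇V_pair (equivalently, sup over configurations of the operator norm of the Hessian of V_pair) is at least γη/4; in particular Lip(∇V_pair) ∈ Ω(γη). -/

import Mathlib

open scoped RealInnerProductSpace
open Filter

section aux
variable {d η : ℕ}

set_option maxHeartbeats 1000000 in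
/-- per-δ bound -/
lemma perDelta (hd : 0 < d) (hη : 2 < η)
    (V : ℝ → ℝ)
    (hV : Differentiable ℝ V)
    (hV'diff : Differentiable ℝ (deriv V))
    (r₀ : ℝ) (hr₀ : 0 < r₀)
    (Vpair : (PiLp 2 fun _ : Fin η => EuclideanSpace ℝ (Fin d)) → ℝ)
    (hVpair : ∀ x, Vpair x =
      (1/2) * ∑ i : Fin η, ∑ j : Fin η, if j ≠ i then V ‖x i - x j‖ else 0)
    (K : NNReal) (hK : LipschitzWith K (gradient Vpair))
    (δ : ℝ) (hδ : 0 < δ) :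
    |∑ j ∈ Finset.univ.erase (⟨0, by omega⟩ : Fin η),
        deriv (deriv V) (r₀ + δ * (j : Fin η))| ≤ K := by
  classical
  set i0 : Fin η := ⟨0, by omega⟩ with hi0
  set e₀ : EuclideanSpace ℝ (Fin d) := EuclideanSpace.single ⟨0, hd⟩ (1:ℝ) with he₀
  have he₀norm : ‖e₀‖ = 1 := by rw [he₀, EuclideanSpace.norm_single]; norm_num
  have he₀ne : e₀ ≠ 0 := by intro h; rw [h] at he₀norm; simp at he₀norm
  -- scalar positions
  set s : ℝ → Fin η → ℝ := fun t i => if i = i0 then r₀ + t else -(δ * ((i : ℕ) : ℝ)) with hs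
  set base : PiLp 2 (fun _ : Fin η => EuclideanSpace ℝ (Fin d)) := (WithLp.equiv 2 _).symm (fun i => s 0 i • e₀) with hbase
  set v : PiLp 2 (fun _ : Fin η => EuclideanSpace ℝ (Fin d)) := (WithLp.equiv 2 _).symm (Pi.single i0 e₀) with hv
  set c : ℝ → PiLp 2 (fun _ : Fin η => EuclideanSpace ℝ (Fin d)) := fun t => base + t • v with hc
  have hvnorm : ‖v‖ = 1 := by
    rw [hv, WithLp.equiv_symm_apply, PiLp.norm_toLp_single, he₀norm]
  have hcoord : ∀ t i, c t i = s t i • e₀ := by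
    intro t i
    rw [hc]
    show base i + t • (Pi.single i0 e₀ : ∀ _ : Fin η, EuclideanSpace ℝ (Fin d)) i
        = s t i • e₀
    rw [hbase]
    show s 0 i • e₀ + t • (Pi.single i0 e₀ : ∀ _ : Fin η, EuclideanSpace ℝ (Fin d)) i
        = s t i • e₀
    by_cases h : i = i0
    · subst h; simp only [hs, if_pos rfl, Pi.single_eq_same]
      module
    · simp [hs, h, Pi.single_apply]
  have hdist : ∀ t i j, ‖c t i - c t j‖ = |s t i - s t j| := by
    intro t i j
    rw [hcoord, hcoord, ← sub_smul, norm_smul, he₀norm, mul_one, Real.norm_eq_abs]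
  -- set U
  set U : Set ℝ := Set.Ioi (-(r₀/2)) with hU
  have hUopen : IsOpen U := isOpen_Ioi
  have hsep : ∀ t ∈ U, ∀ i j : Fin η, i ≠ j → s t i ≠ s t j := by
    intro t ht i j hij
    have hδnat : ∀ k : Fin η, k ≠ i0 → (0:ℝ) < δ * ((k : ℕ) : ℝ) := by
      intro k hk
      have : (0:ℕ) < (k : ℕ) := by
        rcases Nat.eq_zero_or_pos (k : ℕ) with h | h
        · exact absurd (Fin.ext h) hk
        · exact h
      positivity
    have hrt : (0:ℝ) < r₀ + t := by
      have : -(r₀/2) < t := ht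
      linarith
    rw [hs]
    by_cases hi : i = i0
    · subst hi
      have hj : j ≠ i0 := hij.symm
      have := hδnat j hj
      intro h
      simp [hj] at h
      linarith
    · by_cases hj : j = i0
      · subst hj
        have := hδnat i hi
        intro h
        simp [hi] at h
        linarith
      · simp only [if_neg hi, if_neg hj]
        have : ((i:ℕ):ℝ) ≠ ((j:ℕ):ℝ) := by
          exact_mod_cast fun h => hij (Fin.ext (by exact_mod_cast h))
        intro h
        apply this
        have := neg_injective h
        exact mul_left_cancel₀ (ne_of_gt hδ) this
  -- abbreviations
  set W : ℝ → Fin η → ℝ := fun t j => V (r₀ + t + δ * ((j:ℕ):ℝ)) with hW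
  have hjpos : ∀ j ∈ Finset.univ.erase i0, (0:ℝ) < δ * ((j:ℕ):ℝ) := by
    intro j hj
    have hj' : j ≠ i0 := Finset.ne_of_mem_erase hj
    have : (0:ℕ) < (j : ℕ) := by
      rcases Nat.eq_zero_or_pos (j : ℕ) with h | h
      · exact absurd (Fin.ext h) hj'
      · exact h
    positivity
  have hrt : ∀ t ∈ U, (0:ℝ) < r₀ + t := by
    intro t ht
    have : -(r₀/2) < t := ht
    linarith
  have hd0j : ∀ t ∈ U, ∀ j ∈ Finset.univ.erase i0, ‖c t i0 - c t j‖ = r₀ + t + δ * ((j:ℕ):ℝ) := by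
    intro t ht j hj
    have hj' : j ≠ i0 := Finset.ne_of_mem_erase hj
    rw [hdist]
    have h1 : s t i0 = r₀ + t := by simp [hs]
    have h2 : s t j = -(δ * ((j:ℕ):ℝ)) := by simp [hs, hj']
    rw [h1, h2]
    rw [sub_neg_eq_add, abs_of_pos (by linarith [hjpos j hj, hrt t ht])]
  have hdij : ∀ t : ℝ, ∀ i ∈ Finset.univ.erase i0, ∀ j ∈ Finset.univ.erase i0,
      ‖c t i - c t j‖ = ‖c 0 i - c 0 j‖ := by
    intro t i hi j hj
    rw [hdist, hdist]
    have h1 : ∀ u : ℝ, s u i = -(δ * ((i:ℕ):ℝ)) := by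
      intro u; simp [hs, Finset.ne_of_mem_erase hi]
    have h2 : ∀ u : ℝ, s u j = -(δ * ((j:ℕ):ℝ)) := by
      intro u; simp [hs, Finset.ne_of_mem_erase hj]
    rw [h1, h2, h1, h2]
  have hrow0 : ∀ t ∈ U,
      (∑ j : Fin η, if j ≠ i0 then V ‖c t i0 - c t j‖ else 0)
        = ∑ j ∈ Finset.univ.erase i0, W t j := by
    intro t ht
    rw [← Finset.sum_filter, Finset.filter_ne']
    refine Finset.sum_congr rfl fun j hj => ?_
    rw [hd0j t ht j hj]
  set R : Fin η → ℝ := fun i =>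
    ∑ j ∈ Finset.univ.erase i0, (if j ≠ i then V ‖c 0 i - c 0 j‖ else 0) with hR
  have hrowi : ∀ t ∈ U, ∀ i ∈ Finset.univ.erase i0,
      (∑ j : Fin η, if j ≠ i then V ‖c t i - c t j‖ else 0) = W t i + R i := by
    intro t ht i hi
    have hi' : i ≠ i0 := Finset.ne_of_mem_erase hi
    rw [← Finset.sum_erase_add _ _ (Finset.mem_univ i0)]
    have h1 : (if i0 ≠ i then V ‖c t i - c t i0‖ else 0) = W t i := by
      rw [if_pos (Ne.symm hi')]
      have : ‖c t i - c t i0‖ = ‖c t i0 - c t i‖ := by rw [norm_sub_rev]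
      rw [this, hd0j t ht i hi]
    rw [h1, hR]
    have h2 : ∀ j ∈ Finset.univ.erase i0,
        (if j ≠ i then V ‖c t i - c t j‖ else 0) = (if j ≠ i then V ‖c 0 i - c 0 j‖ else 0) := by
      intro j hj
      by_cases h : j = i
      · simp [h]
      · rw [if_pos h, if_pos h, hdij t i hi j hj]
    rw [Finset.sum_congr rfl h2, add_comm]
  set Cδ : ℝ := (1/2) * ∑ i ∈ Finset.univ.erase i0, R i with hCδ
  have hgsum : ∀ t ∈ U, Vpair (c t) = (∑ j ∈ Finset.univ.erase i0, W t j) + Cδ := by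
    intro t ht
    rw [hVpair]
    rw [← Finset.sum_erase_add _ _ (Finset.mem_univ i0), hrow0 t ht]
    rw [Finset.sum_congr rfl (hrowi t ht), Finset.sum_add_distrib]
    rw [hCδ]
    ring
  -- differentiability of Vpair along the path
  have hfun : Vpair = fun x =>
      (1/2) * ∑ i : Fin η, ∑ j : Fin η, if j ≠ i then V ‖x i - x j‖ else 0 := funext hVpair
  have hdiffat : ∀ t ∈ U, DifferentiableAt ℝ Vpair (c t) := by
    intro t ht
    rw [hfun]
    apply DifferentiableAt.const_mul
    apply DifferentiableAt.fun_sum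
    intro i _
    apply DifferentiableAt.fun_sum
    intro j _
    by_cases h : j = i
    · simp [h]
    · simp only [if_pos h]
      have hL : DifferentiableAt ℝ
          (fun x : PiLp 2 (fun _ : Fin η => EuclideanSpace ℝ (Fin d)) => x i - x j) (c t) := by
        exact ((PiLp.proj (𝕜 := ℝ) (p := (2:ENNReal))
            (β := fun _ : Fin η => EuclideanSpace ℝ (Fin d)) i).differentiableAt).sub
          ((PiLp.proj (𝕜 := ℝ) (p := (2:ENNReal))
            (β := fun _ : Fin η => EuclideanSpace ℝ (Fin d)) j).differentiableAt)
      have hne : c t i - c t j ≠ 0 := by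
        rw [← norm_ne_zero_iff, hdist]
        exact abs_ne_zero.2 (sub_ne_zero.2 (hsep t ht i j (Ne.symm h)))
      exact DifferentiableAt.comp _ (hV _) (hL.norm ℝ hne)
  -- path derivative
  letI : ContinuousSMul ℝ (PiLp 2 (fun _ : Fin η => EuclideanSpace ℝ (Fin d))) :=
    IsBoundedSMul.continuousSMul
  have hasD_c : ∀ t : ℝ, HasDerivAt c v t := by
    intro t
    rw [hc]
    simpa using ((hasDerivAt_id t).smul_const v).const_add base
  -- directional derivative = inner with gradient
  have hFgrad : ∀ t ∈ U, HasDerivAt (fun u => Vpair (c u))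
      (⟪gradient Vpair (c t), v⟫) t := by
    intro t ht
    have h1 : HasFDerivAt Vpair
        (InnerProductSpace.toDual ℝ _ (gradient Vpair (c t))) (c t) :=
      ((hdiffat t ht).hasGradientAt).hasFDerivAt
    have h2 := h1.comp_hasDerivAt t (hasD_c t)
    simpa [InnerProductSpace.toDual_apply_apply, Function.comp_def] using h2
  -- explicit derivative
  set F : ℝ → ℝ := fun t => ∑ j ∈ Finset.univ.erase i0, deriv V (r₀ + t + δ * ((j:ℕ):ℝ))
    with hF
  have hFexp : ∀ t ∈ U, HasDerivAt (fun u => Vpair (c u)) (F t) t := by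
    intro t ht
    have hG : HasDerivAt (fun u => (∑ j ∈ Finset.univ.erase i0, W u j) + Cδ) (F t) t := by
      apply HasDerivAt.add_const
      apply HasDerivAt.fun_sum
      intro j _
      have ha : HasDerivAt (fun u : ℝ => r₀ + u + δ * ((j:ℕ):ℝ)) 1 t := by
        simpa using (((hasDerivAt_id t).const_add r₀).add_const (δ * ((j:ℕ):ℝ)))
      simpa [hW, Function.comp_def] using ((hV (r₀ + t + δ * ((j:ℕ):ℝ))).hasDerivAt.comp t ha)
    apply hG.congr_of_eventuallyEq
    filter_upwards [hUopen.mem_nhds ht] with u hu using hgsum u hu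
  have hFeq : ∀ t ∈ U, F t = ⟪gradient Vpair (c t), v⟫ := by
    intro t ht
    exact (hFexp t ht).unique (hFgrad t ht)
  -- Lipschitz bound on F
  have hlip : LipschitzOnWith K F U := by
    rw [lipschitzOnWith_iff_dist_le_mul]
    intro x hx y hy
    have hcxy : c x - c y = (x - y) • v := by rw [hc]; module
    calc dist (F x) (F y) = |⟪gradient Vpair (c x) - gradient Vpair (c y), v⟫| := by
          rw [Real.dist_eq, hFeq x hx, hFeq y hy, inner_sub_left]
      _ ≤ ‖gradient Vpair (c x) - gradient Vpair (c y)‖ * ‖v‖ := abs_real_inner_le_norm _ _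
      _ = dist (gradient Vpair (c x)) (gradient Vpair (c y)) := by
          rw [hvnorm, mul_one, dist_eq_norm]
      _ ≤ K * dist (c x) (c y) := hK.dist_le_mul _ _
      _ = K * dist x y := by
          rw [dist_eq_norm, hcxy, norm_smul, hvnorm, mul_one, Real.norm_eq_abs, Real.dist_eq]
  -- second derivative at 0
  set S : ℝ := ∑ j ∈ Finset.univ.erase i0, deriv (deriv V) (r₀ + δ * ((j:ℕ):ℝ)) with hSdef
  have hS : HasDerivAt F S 0 := by
    rw [hF, hSdef]
    apply HasDerivAt.fun_sum
    intro j _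
    have ha : HasDerivAt (fun u : ℝ => r₀ + u + δ * ((j:ℕ):ℝ)) 1 0 := by
      simpa using (((hasDerivAt_id (0:ℝ)).const_add r₀).add_const (δ * ((j:ℕ):ℝ)))
    have := (hV'diff (r₀ + 0 + δ * ((j:ℕ):ℝ))).hasDerivAt.comp 0 ha
    simpa [Function.comp_def] using this
  have h0U : (0:ℝ) ∈ U := by
    rw [hU]; simp; positivity
  have hbound : ‖S‖ ≤ (K:ℝ) := by
    have hfd := hS.hasFDerivAt
    have := hfd.le_of_lipschitzOn (hUopen.mem_nhds h0U) hlip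
    rwa [ContinuousLinearMap.norm_toSpanSingleton] at this
  rw [Real.norm_eq_abs] at hbound
  exact hbound
end aux

/-- The Lipschitz constant of the gradient of the pairwise potential
`V_pair(x) = (1/2) Σ_{i≠j} V(‖x_i - x_j‖)` is at least `γη/4`, where `γ` is the
Lipschitz constant of `V'` (attained as `|V''(r₀)|` at some `r₀ > 0`). -/
theorem stmt0
    {d η : ℕ} (hd : 0 < d) (hη : 2 < η) (hηeven : Even η)
    (V : ℝ → ℝ) (γ : ℝ) (hγ : 0 < γ)
    (hV : Differentiable ℝ V)
    (hVlip : LipschitzWith γ.toNNReal (deriv V))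
    (hV'diff : Differentiable ℝ (deriv V))
    (hV''cont : Continuous (deriv (deriv V)))
    (r₀ : ℝ) (hr₀ : 0 < r₀) (hattain : |deriv (deriv V) r₀| = γ)
    (Vpair : (PiLp 2 fun _ : Fin η => EuclideanSpace ℝ (Fin d)) → ℝ)
    (hVpair : ∀ x, Vpair x =
      (1/2) * ∑ i : Fin η, ∑ j : Fin η, if j ≠ i then V ‖x i - x j‖ else 0)
    (K : NNReal) (hK : LipschitzWith K (gradient Vpair)) :
    γ * η / 4 ≤ K := by
  classical
  set i0 : Fin η := ⟨0, by omega⟩ with hi0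
  set S : ℝ → ℝ := fun δ =>
    ∑ j ∈ Finset.univ.erase i0, deriv (deriv V) (r₀ + δ * ((j:ℕ):ℝ)) with hS
  have hper : ∀ δ : ℝ, 0 < δ → |S δ| ≤ (K:ℝ) := by
    intro δ hδ
    exact perDelta hd hη V hV hV'diff r₀ hr₀ Vpair hVpair K hK δ hδ
  have hScont : Continuous S := by
    apply continuous_finset_sum
    intro j _
    exact hV''cont.comp (continuous_const.add (continuous_id.mul continuous_const))
  have hS0 : S 0 = ((η:ℝ) - 1) * deriv (deriv V) r₀ := by
    rw [hS]
    simp only [zero_mul, add_zero]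
    rw [Finset.sum_const, Finset.card_erase_of_mem (Finset.mem_univ i0),
      Finset.card_univ, Fintype.card_fin]
    have : ((η - 1 : ℕ) : ℝ) = (η : ℝ) - 1 := by
      rw [Nat.cast_sub (by omega)]; norm_num
    rw [nsmul_eq_mul, this]
  have htend : Filter.Tendsto (fun δ => |S δ|) (nhdsWithin 0 (Set.Ioi 0))
      (nhds (|((η:ℝ) - 1) * deriv (deriv V) r₀|)) := by
    have h1 : Filter.Tendsto S (nhdsWithin 0 (Set.Ioi 0)) (nhds (S 0)) :=
      (hScont.tendsto 0).mono_left nhdsWithin_le_nhds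
    have h2 := h1.abs
    rwa [hS0] at h2
  have hle : |((η:ℝ) - 1) * deriv (deriv V) r₀| ≤ (K:ℝ) := by
    refine le_of_tendsto htend ?_
    exact Filter.eventually_of_mem self_mem_nhdsWithin fun δ hδ => hper δ hδ
  rw [abs_mul, hattain, abs_of_nonneg (by
    have : (3:ℝ) ≤ (η:ℝ) := by exact_mod_cast hη
    linarith)] at hle
  have hη3 : (3:ℝ) ≤ (η:ℝ) := by exact_mod_cast hη
  nlinarith [hle, hγ, hη3]
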